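/- If after a call sequence σ some agent a is such that no other agent is familiar with a's secret, then any call sequence σ.τ after which all agents are experts satisfies |τ| ≥ n − 1. Consequently, a call sequence whose first two calls do not involve some agent has length at least 5 when n = 4 and all agents become experts. -/

import Mathlib

/-- A call is an ordered pair of distinct agents (caller, callee). -/
def Call (n : ℕ) : Type := {p : Fin n × Fin n // p.1 ≠ p.2}

namespace Gossip

variable {n : ℕ}

/-- The caller of a call. -/
def caller (c : Call n) : Fin n := c.1.1

/-- The callee of a call. -/
def callee (c : Call n) : Fin n := c.1.2

/-- Agent `a` is involved in call `c`. -/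
def involves (c : Call n) (a : Fin n) : Prop := a = caller c ∨ a = callee c

/-- A gossip situation assigns to each agent the set of secrets it is familiar with;
secrets are identified with the agents holding them. -/
def Situation (n : ℕ) := Fin n → Finset (Fin n)

/-- The initial gossip situation: every agent only holds its own secret. -/
def root : Situation n := fun a => {a}

/-- The effect of a call on a gossip situation: caller and callee share their secrets. -/
def applyCall (c : Call n) (s : Situation n) : Situation n :=
  fun x => if x = caller c ∨ x = callee c then s (caller c) ∪ s (callee c) else s x

/-- The effect of a call sequence on a gossip situation. -/
def applySeq (σ : List (Call n)) (s : Situation n) : Situation n :=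
  σ.foldl (fun t c => applyCall c t) s

end Gossip

open Gossip

/-- An agent is an expert in a situation if it is familiar with all secrets. -/
def IsExpert {n : ℕ} (s : Gossip.Situation n) (a : Fin n) : Prop :=
  s a = Finset.univ

instance decMemSituation {n : ℕ} (s : Situation n) (a : Fin n) : DecidablePred (fun b => a ∈ s b) :=
  fun b => inferInstanceAs (Decidable (a ∈ (s b : Finset (Fin n))))

/-- knowers of secret a -/
def knowers {n : ℕ} (s : Situation n) (a : Fin n) : Finset (Fin n) :=
  Finset.univ.filter (fun b => a ∈ s b)

lemma applySeq_cons {n : ℕ} (c : Call n) (σ : List (Call n)) (s : Situation n) :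
    applySeq (c :: σ) s = applySeq σ (applyCall c s) := rfl

lemma applySeq_append {n : ℕ} (σ τ : List (Call n)) (s : Situation n) :
    applySeq (σ ++ τ) s = applySeq τ (applySeq σ s) := by
  simp [applySeq, List.foldl_append]

lemma card_knowers_applyCall {n : ℕ} (c : Call n) (s : Situation n) (a : Fin n) :
    (knowers (applyCall c s) a).card ≤ (knowers s a).card + 1 := by
  by_cases h1 : a ∈ s (caller c)
  · have hsub : knowers (applyCall c s) a ⊆ insert (callee c) (knowers s a) := by
      intro b hb
      rw [knowers, Finset.mem_filter] at hb
      simp only [knowers, Finset.mem_filter, Finset.mem_univ, true_and, applyCall] at hb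
      simp only [Finset.mem_insert, knowers, Finset.mem_filter, Finset.mem_univ, true_and]
      split at hb
      · rename_i hbc
        rcases hbc with hbc | hbc
        · right; rw [hbc]; exact h1
        · left; exact hbc
      · right; exact hb
    calc (knowers (applyCall c s) a).card ≤ (insert (callee c) (knowers s a)).card :=
          Finset.card_le_card hsub
      _ ≤ (knowers s a).card + 1 := Finset.card_insert_le _ _
  · by_cases h2 : a ∈ s (callee c)
    · have hsub : knowers (applyCall c s) a ⊆ insert (caller c) (knowers s a) := by
        intro b hb
        rw [knowers, Finset.mem_filter] at hb
        simp only [knowers, Finset.mem_filter, Finset.mem_univ, true_and, applyCall] at hb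
        simp only [Finset.mem_insert, knowers, Finset.mem_filter, Finset.mem_univ, true_and]
        split at hb
        · rename_i hbc
          rcases hbc with hbc | hbc
          · left; exact hbc
          · right; rw [hbc]; exact h2
        · right; exact hb
      calc (knowers (applyCall c s) a).card ≤ (insert (caller c) (knowers s a)).card :=
            Finset.card_le_card hsub
        _ ≤ (knowers s a).card + 1 := Finset.card_insert_le _ _
    · have hsub : knowers (applyCall c s) a ⊆ knowers s a := by
        intro b hb
        rw [knowers, Finset.mem_filter] at hb
        simp only [knowers, Finset.mem_filter, Finset.mem_univ, true_and, applyCall] at hb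
        simp only [knowers, Finset.mem_filter, Finset.mem_univ, true_and]
        split at hb
        · rcases Finset.mem_union.1 hb with h | h
          · exact absurd h h1
          · exact absurd h h2
        · exact hb
      exact le_trans (Finset.card_le_card hsub) (Nat.le_succ _)

lemma card_knowers_applySeq {n : ℕ} (τ : List (Call n)) (s : Situation n) (a : Fin n) :
    (knowers (applySeq τ s) a).card ≤ (knowers s a).card + τ.length := by
  induction τ generalizing s with
  | nil => simp [applySeq]
  | cons c τ ih =>
    rw [applySeq_cons]
    calc (knowers (applySeq τ (applyCall c s)) a).card
        ≤ (knowers (applyCall c s) a).card + τ.length := ih _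
      _ ≤ (knowers s a).card + 1 + τ.length :=
          Nat.add_le_add_right (card_knowers_applyCall c s a) _
      _ = (knowers s a).card + (c :: τ).length := by simp; ring

lemma not_knows_applySeq {n : ℕ} (σ : List (Call n)) (a : Fin n)
    (h : ∀ c ∈ σ, ¬ involves c a) (s : Situation n)
    (hs : ∀ b, b ≠ a → a ∉ s b) : ∀ b, b ≠ a → a ∉ applySeq σ s b := by
  induction σ generalizing s with
  | nil => exact hs
  | cons c σ ih =>
    rw [applySeq_cons]
    apply ih (fun c' hc' => h c' (List.mem_cons_of_mem _ hc'))
    intro b hb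
    have hc := h c List.mem_cons_self
    simp only [involves, not_or] at hc
    simp only [applyCall]
    split
    · intro hmem
      rcases Finset.mem_union.1 hmem with h' | h'
      · exact hs _ (fun e => hc.1 e.symm) h'
      · exact hs _ (fun e => hc.2 e.symm) h'
    · exact hs b hb

theorem lower_bound_after_isolation :
    (∀ (n : ℕ), 3 ≤ n → ∀ (a : Fin n) (σ τ : List (Call n)),
      (∀ b : Fin n, b ≠ a → a ∉ applySeq σ root b) →
      (∀ b : Fin n, IsExpert (applySeq (σ ++ τ) root) b) →
      n - 1 ≤ τ.length) ∧
    (∀ (σ : List (Call 4)) (a : Fin 4),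
      2 ≤ σ.length →
      (∀ c ∈ σ.take 2, ¬ involves c a) →
      (∀ b : Fin 4, IsExpert (applySeq σ root) b) →
      5 ≤ σ.length) := by
  have main : ∀ (n : ℕ), 3 ≤ n → ∀ (a : Fin n) (σ τ : List (Call n)),
      (∀ b : Fin n, b ≠ a → a ∉ applySeq σ root b) →
      (∀ b : Fin n, IsExpert (applySeq (σ ++ τ) root) b) →
      n - 1 ≤ τ.length := by
    intro n hn a σ τ h1 h2
    have hsub : knowers (applySeq σ root) a ⊆ {a} := by
      intro b hb
      simp only [knowers, Finset.mem_filter, Finset.mem_univ, true_and] at hb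
      simp only [Finset.mem_singleton]
      by_contra hba
      exact h1 b hba hb
    have hcard1 : (knowers (applySeq σ root) a).card ≤ 1 := by
      calc (knowers (applySeq σ root) a).card ≤ ({a} : Finset (Fin n)).card :=
            Finset.card_le_card hsub
        _ = 1 := Finset.card_singleton a
    have hfull : knowers (applySeq (σ ++ τ) root) a = Finset.univ := by
      ext b
      simp only [knowers, Finset.mem_filter, Finset.mem_univ, true_and, iff_true]
      have := h2 b
      rw [IsExpert] at this
      rw [this]
      exact Finset.mem_univ a
    have hn' : (knowers (applySeq (σ ++ τ) root) a).card = n := by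
      rw [hfull]; simp
    have := card_knowers_applySeq τ (applySeq σ root) a
    rw [← applySeq_append, hn'] at this
    omega
  refine ⟨main, ?_⟩
  intro σ a hlen h2calls hexp
  have hiso : ∀ b : Fin 4, b ≠ a → a ∉ applySeq (σ.take 2) root b := by
    apply not_knows_applySeq _ _ h2calls
    intro b hb
    simp only [root, Finset.mem_singleton]
    exact fun e => hb e.symm
  have hexp' : ∀ b : Fin 4, IsExpert (applySeq (σ.take 2 ++ σ.drop 2) root) b := by
    rw [List.take_append_drop]
    exact hexp
  have := main 4 (by norm_num) a (σ.take 2) (σ.drop 2) hiso hexp'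
  have hdl : (σ.drop 2).length = σ.length - 2 := List.length_drop
  omega
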